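/- Given an adjoint triple f ⊣ g ⊣ h between categories (f, h : C → D, g : D → C), the functor f is fully faithful if and only if h is fully faithful. -/

import Mathlib

open CategoryTheory

/-- Given an adjoint triple `f ⊣ g ⊣ h` with `f, h : C ⥤ D` and `g : D ⥤ C`,
the functor `f` is fully faithful iff `h` is fully faithful. -/
theorem stmt_17 {C : Type u₁} {D : Type u₂} [Category.{v₁} C] [Category.{v₂} D]
    (f : C ⥤ D) (g : D ⥤ C) (h : C ⥤ D)
    (adj₁ : f ⊣ g) (adj₂ : g ⊣ h) :
    (f.Full ∧ f.Faithful) ↔ (h.Full ∧ h.Faithful) := by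
  constructor
  · rintro ⟨hf, hff⟩
    have ff := (Adjunction.Triple.mk adj₁ adj₂).fullyFaithfulEquiv (Functor.FullyFaithful.ofFullyFaithful f)
    exact ⟨ff.full, ff.faithful⟩
  · rintro ⟨hf, hff⟩
    have ff := (Adjunction.Triple.mk adj₁ adj₂).fullyFaithfulEquiv.symm (Functor.FullyFaithful.ofFullyFaithful h)
    exact ⟨ff.full, ff.faithful⟩
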